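/- Every finitely generated residually nilpotent group is residually finite. That is, if G is a finitely generated group such that for every g ∈ G with g ≠ 1 there exists a normal subgroup N of G with g ∉ N and G/N nilpotent, then for every g ∈ G with g ≠ 1 there exists a normal subgroup M of G with g ∉ M and G/M finite. -/

import Mathlib

open Monoid

open Subgroup

lemma comm_pow_central {G : Type*} [Group G] (x q : G)
    (h : x * q * x⁻¹ * q⁻¹ ∈ Subgroup.center G) (n : ℕ) :
    x ^ n * q * (x ^ n)⁻¹ * q⁻¹ = (x * q * x⁻¹ * q⁻¹) ^ n := by
  induction n with
  | zero => group
  | succ n ih =>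
    have hc : ∀ a : G, a * (x * q * x⁻¹ * q⁻¹) = (x * q * x⁻¹ * q⁻¹) * a := fun a =>
      Subgroup.mem_center_iff.mp h a
    have key : x ^ (n + 1) * q * (x ^ (n + 1))⁻¹ * q⁻¹
        = x ^ n * (x * q * x⁻¹ * q⁻¹ * q) * (x ^ n)⁻¹ * q⁻¹ := by
      rw [pow_succ]; group
    rw [key, ← mul_assoc (x ^ n), hc (x ^ n), pow_succ', ← ih]
    group

lemma torsion_of_fg_nilpotent_center_torsion :
    ∀ (G : Type) [Group G] [Group.IsNilpotent G],
      Group.FG G → Monoid.IsTorsion (Subgroup.center G) → Monoid.IsTorsion G := by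
  intro G _ _
  refine nilpotent_center_quotient_ind
    (P := fun G _ _ => Group.FG G → Monoid.IsTorsion (Subgroup.center G) → Monoid.IsTorsion G)
    G ?_ ?_
  · intro G _ _ _ _ g
    have : g = 1 := Subsingleton.elim g 1
    rw [this]; exact IsOfFinOrder.one
  · intro G _ _ ih hfg hZ
    -- the center of G ⧸ center G is torsion
    have hZQ : Monoid.IsTorsion (Subgroup.center (G ⧸ Subgroup.center G)) := by
      intro y
      obtain ⟨x, hx⟩ := QuotientGroup.mk'_surjective (Subgroup.center G) (y : G ⧸ Subgroup.center G)
      have hcen : ∀ q : G, x * q * x⁻¹ * q⁻¹ ∈ Subgroup.center G := by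
        intro q
        rw [← QuotientGroup.eq_one_iff]
        have hyc : ((q : G ⧸ Subgroup.center G)) * (y : G ⧸ Subgroup.center G)
            = (y : G ⧸ Subgroup.center G) * q := Subgroup.mem_center_iff.mp y.2 _
        have hx' : ((x : G ⧸ Subgroup.center G)) = (y : G ⧸ Subgroup.center G) := hx
        simp only [QuotientGroup.mk_mul, QuotientGroup.mk_inv]
        rw [hx', ← hyc]
        group
      obtain ⟨S, hS1, hS2⟩ := Group.fg_iff.mp hfg
      set n : ℕ := ∏ s ∈ hS2.toFinset, orderOf (x * s * x⁻¹ * s⁻¹) with hn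
      have hfin : ∀ s : G, IsOfFinOrder (x * s * x⁻¹ * s⁻¹) := by
        intro s
        obtain ⟨m, hm, hpow⟩ := isOfFinOrder_iff_pow_eq_one.mp (hZ ⟨_, hcen s⟩)
        exact isOfFinOrder_iff_pow_eq_one.mpr ⟨m, hm, by simpa using congrArg Subtype.val hpow⟩
      have hnpos : 0 < n := Finset.prod_pos fun s _ => (hfin s).orderOf_pos
      have hpow1 : ∀ s ∈ hS2.toFinset, x ^ n * s * (x ^ n)⁻¹ * s⁻¹ = 1 := by
        intro s hs
        rw [comm_pow_central x s (hcen s), ← orderOf_dvd_iff_pow_eq_one]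
        exact Finset.dvd_prod_of_mem _ hs
      have hxn : x ^ n ∈ Subgroup.center G := by
        have hle : Subgroup.closure S ≤ Subgroup.centralizer {x ^ n} := by
          rw [Subgroup.closure_le]
          intro s hs
          rw [SetLike.mem_coe, Subgroup.mem_centralizer_iff]
          intro h hh
          rw [Set.mem_singleton_iff] at hh
          subst hh
          have := hpow1 s (hS2.mem_toFinset.mpr hs)
          rw [mul_inv_eq_one] at this
          rw [mul_inv_eq_iff_eq_mul] at this
          exact this
        rw [Subgroup.mem_center_iff]
        intro g
        have hg : g ∈ Subgroup.centralizer {x ^ n} := hle (hS1 ▸ Subgroup.mem_top g)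
        exact (Subgroup.mem_centralizer_iff.mp hg (x ^ n) rfl).symm
      refine isOfFinOrder_iff_pow_eq_one.mpr ⟨n, hnpos, ?_⟩
      have : ((y : G ⧸ Subgroup.center G)) ^ n = 1 := by
        rw [← hx]
        show ((x : G ⧸ Subgroup.center G)) ^ n = 1
        have h1 : ((x ^ n : G) : G ⧸ Subgroup.center G) = 1 := (QuotientGroup.eq_one_iff _).mpr hxn
        simpa using h1
      exact Subtype.ext (by simpa using this)
    have hQ : Monoid.IsTorsion (G ⧸ Subgroup.center G) := ih inferInstance hZQ
    intro x
    obtain ⟨m, hm, hpow⟩ := isOfFinOrder_iff_pow_eq_one.mp (hQ (x : G ⧸ Subgroup.center G))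
    have hxm : x ^ m ∈ Subgroup.center G := by
      rw [← QuotientGroup.eq_one_iff]
      simpa using hpow
    obtain ⟨k, hk, hpk⟩ := isOfFinOrder_iff_pow_eq_one.mp (hZ ⟨_, hxm⟩)
    refine isOfFinOrder_iff_pow_eq_one.mpr ⟨m * k, Nat.mul_pos hm hk, ?_⟩
    rw [pow_mul]
    simpa using congrArg Subtype.val hpk

lemma finite_of_fg_nilpotent_torsion :
    ∀ (G : Type) [Group G] [Group.IsNilpotent G],
      Group.FG G → Monoid.IsTorsion G → Finite G := by
  intro G _ _
  refine nilpotent_center_quotient_ind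
    (P := fun G _ _ => Group.FG G → Monoid.IsTorsion G → Finite G) G ?_ ?_
  · intro G _ _ _ _
    exact Finite.of_subsingleton
  · intro G _ _ ih hfg hT
    haveI := hfg
    haveI hfinQ : Finite (G ⧸ Subgroup.center G) :=
      ih inferInstance (IsTorsion.of_surjective (f := QuotientGroup.mk' _)
        (QuotientGroup.mk'_surjective _) hT)
    haveI : (Subgroup.center G).FiniteIndex := Subgroup.finiteIndex_of_finite_quotient
    haveI : Group.FG (Subgroup.center G) := Subgroup.fg_of_index_ne_zero _
    haveI : Finite (Subgroup.center G) :=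
      open scoped IsMulCommutative in CommGroup.finite_of_fg_torsion _ (IsTorsion.subgroup hT _)
    exact Finite.of_equiv _ (Subgroup.groupEquivQuotientProdSubgroup
      (s := Subgroup.center G)).symm

/-- Every finitely generated residually nilpotent group is residually finite. -/
theorem residually_finite_of_fg_residually_nilpotent
    (G : Type) [Group G] (hfg : Group.FG G)
    (hres : ∀ g : G, g ≠ 1 → ∃ (N : Subgroup G) (hN : N.Normal),
      g ∉ N ∧ (letI := hN; Group.IsNilpotent (G ⧸ N))) :
    ∀ g : G, g ≠ 1 → ∃ (M : Subgroup G), M.Normal ∧ g ∉ M ∧ Finite (G ⧸ M) := by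
  intro g hg
  obtain ⟨N₀, hN₀, hgN₀, hnil⟩ := hres g hg
  -- Zorn's lemma: a maximal normal subgroup M ⊇ N₀ avoiding g
  set S : Set (Subgroup G) := {N | N.Normal ∧ N₀ ≤ N ∧ g ∉ N} with hSdef
  have hN₀S : N₀ ∈ S := ⟨hN₀, le_refl _, hgN₀⟩
  have hzorn : ∀ c ⊆ S, IsChain (· ≤ ·) c → ∀ y ∈ c, ∃ ub ∈ S, ∀ z ∈ c, z ≤ ub := by
    intro c hcS hchain y hy
    refine ⟨sSup c, ?_, fun z hz => le_sSup hz⟩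
    have hmem : ∀ x : G, x ∈ sSup c ↔ ∃ N ∈ c, x ∈ N := fun x =>
      Subgroup.mem_sSup_of_directedOn ⟨y, hy⟩ hchain.directedOn
    refine ⟨⟨fun n hn a => ?_⟩, le_trans (hcS hy).2.1 (le_sSup hy), fun hgc => ?_⟩
    · obtain ⟨N, hNc, hnN⟩ := (hmem n).mp hn
      exact (hmem _).mpr ⟨N, hNc, (hcS hNc).1.conj_mem n hnN a⟩
    · obtain ⟨N, hNc, hgNmem⟩ := (hmem g).mp hgc
      exact (hcS hNc).2.2 hgNmem
  obtain ⟨M, hN₀M, hMmax⟩ := zorn_le_nonempty₀ S hzorn N₀ hN₀S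
  obtain ⟨⟨hMnormal, hN₀leM, hgM⟩, hMmax'⟩ := hMmax
  haveI := hMnormal
  haveI := hfg
  -- G ⧸ M is nilpotent
  haveI hQnil : Group.IsNilpotent (G ⧸ M) := by
    letI := hN₀
    haveI := hnil
    refine nilpotent_of_surjective (h := hnil)
      (QuotientGroup.map N₀ M (MonoidHom.id G) (by simpa using hN₀leM)) ?_
    intro y
    obtain ⟨x, rfl⟩ := QuotientGroup.mk'_surjective M y
    exact ⟨QuotientGroup.mk x, rfl⟩
  have hgQ : (g : G ⧸ M) ≠ 1 := by
    simpa [QuotientGroup.eq_one_iff] using hgM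
  -- monolith: every nontrivial normal subgroup of G ⧸ M contains g
  have hmono : ∀ K : Subgroup (G ⧸ M), K.Normal → K ≠ ⊥ → (g : G ⧸ M) ∈ K := by
    intro K hK hKbot
    by_contra hgK
    have hK'S : K.comap (QuotientGroup.mk' M) ∈ S :=
      ⟨hK.comap _, le_trans hN₀leM (fun x hx => by
        show ((x : G ⧸ M)) ∈ K
        rw [(QuotientGroup.eq_one_iff x).mpr hx]
        exact K.one_mem), hgK⟩
    have hMleK' : M ≤ K.comap (QuotientGroup.mk' M) := fun x hx => by
      show ((x : G ⧸ M)) ∈ K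
      rw [(QuotientGroup.eq_one_iff x).mpr hx]
      exact K.one_mem
    have hK'M : K.comap (QuotientGroup.mk' M) = M :=
      le_antisymm (hMmax' hK'S hMleK') hMleK'
    apply hKbot
    rw [eq_bot_iff]
    intro k hk
    obtain ⟨x, rfl⟩ := QuotientGroup.mk'_surjective M k
    have hx : x ∈ K.comap (QuotientGroup.mk' M) := hk
    rw [hK'M] at hx
    simpa [Subgroup.mem_bot] using (QuotientGroup.eq_one_iff x).mpr hx
  -- the center of G ⧸ M is torsion
  have hZtor : Monoid.IsTorsion (Subgroup.center (G ⧸ M)) := by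
    intro z
    suffices h : IsOfFinOrder ((z : G ⧸ M)) by
      obtain ⟨n, hn, h1⟩ := isOfFinOrder_iff_pow_eq_one.mp h
      exact isOfFinOrder_iff_pow_eq_one.mpr ⟨n, hn, Subtype.ext (by simpa using h1)⟩
    by_contra hinf
    have hpowmem : ∀ n : ℕ, 0 < n → (g : G ⧸ M) ∈ Subgroup.zpowers ((z : G ⧸ M) ^ n) := by
      intro n hn
      have hcent : ((z : G ⧸ M)) ^ n ∈ Subgroup.center (G ⧸ M) := pow_mem z.2 n
      have hnormal : (Subgroup.zpowers ((z : G ⧸ M) ^ n)).Normal := by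
        constructor
        intro a ha b
        have hacent : a ∈ Subgroup.center (G ⧸ M) :=
          Subgroup.zpowers_le.mpr hcent ha
        have hba : b * a = a * b := Subgroup.mem_center_iff.mp hacent b
        have : b * a * b⁻¹ = a := by rw [hba]; group
        rwa [this]
      have hne : ((z : G ⧸ M)) ^ n ≠ 1 := by
        intro h1
        exact hinf (isOfFinOrder_iff_pow_eq_one.mpr ⟨n, hn, h1⟩)
      exact hmono _ hnormal (fun h => hne (Subgroup.zpowers_eq_bot.mp h)) 
    obtain ⟨k, hk⟩ := hpowmem 1 one_pos
    simp only [pow_one] at hk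
    have hk0 : k ≠ 0 := by
      rintro rfl
      exact hgQ (by simpa using hk.symm)
    obtain ⟨m, hm⟩ := hpowmem (2 * k.natAbs) (by positivity)
    have hinj : Function.Injective fun i : ℤ => (z : G ⧸ M) ^ i :=
      injective_zpow_iff_not_isOfFinOrder.mpr hinf
    have heq : ((2 * k.natAbs : ℤ)) * m = k := by
      apply hinj
      show (z : G ⧸ M) ^ ((2 * k.natAbs : ℤ) * m) = (z : G ⧸ M) ^ k
      rw [zpow_mul, hk]
      rw [← hm]
      norm_cast
    have hdvd : (2 * k.natAbs : ℤ) ∣ k := Dvd.intro m heq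
    have hnat := Int.natAbs_dvd_natAbs.mpr hdvd
    have habs : ((2 * k.natAbs : ℤ)).natAbs = 2 * k.natAbs := by
      rw [Int.natAbs_mul]
      simp [Int.natAbs_abs]
    rw [habs] at hnat
    have := Nat.le_of_dvd (Int.natAbs_pos.mpr hk0) hnat
    omega
  -- conclude
  haveI : Group.FG (G ⧸ M) := inferInstance
  have htor : Monoid.IsTorsion (G ⧸ M) :=
    torsion_of_fg_nilpotent_center_torsion (G ⧸ M) inferInstance hZtor
  have hfin : Finite (G ⧸ M) :=
    finite_of_fg_nilpotent_torsion (G ⧸ M) inferInstance htor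
  exact ⟨M, hMnormal, hgM, hfin⟩
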